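/- Let L = {l ∈ ℤ^N : Σ l_i a_i = 0} and let γ ∈ ℤ^n be good with u ∈ U⁺_min(γ). If l ∈ L with Σ_{i=1}^N l_i > 0, then there exists an index i with l_i > 0 and u_i < l_i. Consequently the operator ∏_{l_i>0} (∂/∂λ_i)^{l_i} annihilates the monomial λ_1^{u_1}⋯λ_N^{u_N}. -/

import Mathlib

open MvPolynomial

/-- The composite operator `∏ᵢ (∂/∂λᵢ)^(e i)` applied to a multivariate
polynomial (the factors commute, so the order of composition is immaterial). -/
noncomputable def applyDiffs {N : ℕ} {F : Type*} [CommSemiring F] (e : Fin N → ℕ)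
    (f : MvPolynomial (Fin N) F) : MvPolynomial (Fin N) F :=
  (List.finRange N).foldr
    (fun i g => ((MvPolynomial.pderiv i).toLinearMap ^ e i) g) f

private lemma aux_pow_zero {N : ℕ} {F : Type*} [CommSemiring F] (i : Fin N) (k : ℕ) :
    ∀ (s : Fin N →₀ ℕ) (c : F), s i < k →
      (((pderiv i).toLinearMap ^ k) (monomial s c)) = 0 := by
  induction k with
  | zero => intro s c h; omega
  | succ k ih =>
    intro s c h
    rw [pow_succ, Module.End.mul_apply]
    have hd : (pderiv i).toLinearMap (monomial s c)
        = monomial (s - Finsupp.single i 1) (c * s i) := by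
      simp [pderiv_monomial]
    rw [hd]
    by_cases h0 : s i = 0
    · simp [h0]
    · apply ih
      have ht := Finsupp.tsub_apply s (Finsupp.single i 1) i
      rw [Finsupp.single_eq_same] at ht
      omega

private lemma aux_pow_preserve {N : ℕ} {F : Type*} [CommSemiring F] (i j : Fin N) (hij : j ≠ i)
    (k : ℕ) : ∀ (s : Fin N →₀ ℕ) (c : F),
      ∃ s' c', (((pderiv j).toLinearMap ^ k) (monomial s c)) = monomial s' c' ∧ s' i = s i := by
  induction k with
  | zero => intro s c; exact ⟨s, c, rfl, rfl⟩
  | succ k ih =>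
    intro s c
    rw [pow_succ, Module.End.mul_apply]
    have hd : (pderiv j).toLinearMap (monomial s c)
        = monomial (s - Finsupp.single j 1) (c * s j) := by
      simp [pderiv_monomial]
    rw [hd]
    obtain ⟨s', c', h1, h2⟩ := ih (s - Finsupp.single j 1) (c * s j)
    refine ⟨s', c', h1, ?_⟩
    rw [h2, Finsupp.tsub_apply, Finsupp.single_apply, if_neg hij]
    omega

private lemma aux_fold_preserve {N : ℕ} {F : Type*} [CommSemiring F] (e : Fin N → ℕ)
    (i : Fin N) (L : List (Fin N)) (hi : i ∉ L) :
    ∀ (s : Fin N →₀ ℕ) (c : F),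
      ∃ s' c', L.foldr (fun j g => ((pderiv j).toLinearMap ^ e j) g) (monomial s c)
        = monomial s' c' ∧ s' i = s i := by
  induction L with
  | nil => intro s c; exact ⟨s, c, rfl, rfl⟩
  | cons j t ih =>
    intro s c
    have hj : j ≠ i := fun h => hi (h ▸ (List.mem_cons_self : j ∈ j :: t))
    have hit : i ∉ t := fun h => hi (List.mem_cons_of_mem _ h)
    obtain ⟨s', c', h1, h2⟩ := ih hit s c
    rw [List.foldr_cons, h1]
    obtain ⟨s'', c'', h3, h4⟩ := aux_pow_preserve i j hj (e j) s' c'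
    exact ⟨s'', c'', h3, h4.trans h2⟩

private lemma aux_fold_zero {N : ℕ} {F : Type*} [CommSemiring F] (e : Fin N → ℕ)
    (i : Fin N) (L : List (Fin N)) (hi : i ∈ L) :
    ∀ (s : Fin N →₀ ℕ) (c : F), s i < e i →
      L.foldr (fun j g => ((pderiv j).toLinearMap ^ e j) g) (monomial s c) = 0 := by
  induction L with
  | nil => simp at hi
  | cons j t ih =>
    intro s c h
    rw [List.foldr_cons]
    by_cases hit : i ∈ t
    · rw [ih hit s c h, map_zero]
    · have hij : i = j := by
        rcases List.mem_cons.mp hi with h' | h'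
        · exact h'
        · exact absurd h' hit
      subst hij
      obtain ⟨s', c', h1, h2⟩ := aux_fold_preserve e i t hit s c
      rw [h1]
      exact aux_pow_zero i (e i) s' c' (h2 ▸ h)

theorem stmt2 {n N : ℕ} (a : Fin N → Fin n → ℤ) (p : ℕ) (hp : p.Prime)
    (F : Type*) [Field F]
    (γ : Fin n → ℤ)
    (l : Fin N → ℤ) (hl : ∀ j, ∑ i, l i * a i j = 0) (hlsum : 0 < ∑ i, l i)
    (u : Fin N → ℕ)
    (hu : ∀ j, ∑ i, (u i : ℤ) * a i j = γ j)
    (humin : ∀ v : Fin N → ℕ, (∀ j, ∑ i, (v i : ℤ) * a i j = γ j) →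
      ∑ i, u i ≤ ∑ i, v i)
    (hgood : ∀ v : Fin N → ℕ, (∀ j, ∑ i, (v i : ℤ) * a i j = γ j) →
      (∑ i, v i = ∑ i, u i) → ∀ i, v i ≤ p - 1) :
    (∃ i, 0 < l i ∧ (u i : ℤ) < l i) ∧
      applyDiffs (fun i => (l i).toNat)
        (MvPolynomial.monomial (Finsupp.equivFunOnFinite.symm u) (1 : F)) = 0 := by
  have hex : ∃ i, 0 < l i ∧ (u i : ℤ) < l i := by
    by_contra hc
    push_neg at hc
    set v : Fin N → ℕ := fun i => ((u i : ℤ) - l i).toNat with hv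
    have hvz : ∀ i, (v i : ℤ) = (u i : ℤ) - l i := by
      intro i
      have hnn : 0 ≤ (u i : ℤ) - l i := by
        rcases le_or_gt (l i) 0 with h | h
        · omega
        · have := hc i h; omega
      simpa [hv] using Int.toNat_of_nonneg hnn
    have hveq : ∀ j, ∑ i, (v i : ℤ) * a i j = γ j := by
      intro j
      simp_rw [hvz, sub_mul]
      rw [Finset.sum_sub_distrib, hu j, hl j, sub_zero]
    have hmin := humin v hveq
    have hmin' : (∑ i, (u i : ℤ)) ≤ ∑ i, (v i : ℤ) := by exact_mod_cast hmin
    have hsum : (∑ i, (v i : ℤ)) = (∑ i, (u i : ℤ)) - ∑ i, l i := by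
      simp_rw [hvz]
      rw [Finset.sum_sub_distrib]
    omega
  refine ⟨hex, ?_⟩
  obtain ⟨i, hli, hui⟩ := hex
  have hlt : (Finsupp.equivFunOnFinite.symm u) i < (l i).toNat := by
    simp only [Finsupp.coe_equivFunOnFinite_symm]
    omega
  exact aux_fold_zero (fun i => (l i).toNat) i (List.finRange N)
    (List.mem_finRange i) _ 1 hlt
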